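/- Let (β̂₁, β̂₂) be Kyle's two-period equilibrium: b̂₁ ∈ (0,1) the unique solution of 1 = b̂₁²/((1 − b̂₁²)²(1 + b̂₁²)), b̂₂ := 1, Σ̂₀ := Σ₀, Σ̂₁ := Σ̂₀/(1 + b̂₁²), β̂₁ := b̂₁σᵤ/√(Σ̂₀Δ), β̂₂ := b̂₂σᵤ/√(Σ̂₁Δ). There exists ε > 0 such that for every starting point β⁽⁰⁾ ∈ ℝ² with 0 < ‖β⁽⁰⁾ − (β̂₁, β̂₂)‖_∞ < ε (sup norm), all iterates β⁽ᵐ⁺¹⁾ := T(β⁽ᵐ⁾) are well defined (remain in the domain of T) and β⁽ᵐ⁾ → (β̂₁, β̂₂) as m → ∞. -/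

import Mathlib

open Filter

/-- First coordinate of the two-period policy-iteration map. -/
noncomputable def T2p1 (Δ σu Sig0 β1 β2 : ℝ) : ℝ :=
  (β1 ^ 2 * Δ * Sig0 + σu ^ 2) *
      (β1 * Δ * Sig0 * (β1 - β2) ^ 2 + σu ^ 2 * (β1 - 2 * β2)) /
    (β1 * Δ * Sig0 *
      (β1 * Δ * Sig0 * (β1 ^ 2 - 4 * β1 * β2 + β2 ^ 2) + σu ^ 2 * (β1 - 4 * β2)))

/-- Second coordinate of the two-period policy-iteration map. -/
noncomputable def T2p2 (Δ σu Sig0 β1 β2 : ℝ) : ℝ :=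
  (Δ * Sig0 * (β1 ^ 2 + β2 ^ 2) + σu ^ 2) / (2 * β2 * Δ * Sig0)

/-- The two-period policy-iteration map as a map `ℝ² → ℝ²`. -/
noncomputable def T2pMap (Δ σu Sig0 : ℝ) (p : ℝ × ℝ) : ℝ × ℝ :=
  (T2p1 Δ σu Sig0 p.1 p.2, T2p2 Δ σu Sig0 p.1 p.2)

/-- The domain of the two-period map: both denominators are nonzero. -/
def T2pDom (Δ σu Sig0 : ℝ) (p : ℝ × ℝ) : Prop :=
  p.1 * Δ * Sig0 *
      (p.1 * Δ * Sig0 * (p.1 ^ 2 - 4 * p.1 * p.2 + p.2 ^ 2) +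
        σu ^ 2 * (p.1 - 4 * p.2)) ≠ 0 ∧
  2 * p.2 * Δ * Sig0 ≠ 0

/-- Auxiliary: iterates of a local contraction around a fixed point stay close
and converge to the fixed point. -/
theorem iterate_conv_aux {f : ℝ × ℝ → ℝ × ℝ} {z : ℝ × ℝ} {K ε : ℝ}
    (hK0 : 0 ≤ K) (hK1 : K < 1)
    (hcontr : ∀ p : ℝ × ℝ, ‖p - z‖ < ε → ‖f p - z‖ ≤ K * ‖p - z‖) :
    ∀ p : ℝ × ℝ, ‖p - z‖ < ε →
      (∀ m : ℕ, ‖f^[m] p - z‖ < ε) ∧ Tendsto (fun m : ℕ => f^[m] p) atTop (nhds z) := by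
  intro p hp
  have key : ∀ m : ℕ, ‖f^[m] p - z‖ ≤ K ^ m * ‖p - z‖ ∧ ‖f^[m] p - z‖ < ε := by
    intro m
    induction m with
    | zero => simp [hp]
    | succ m ih =>
      have h1 : ‖f^[m+1] p - z‖ ≤ K ^ (m+1) * ‖p - z‖ := by
        rw [Function.iterate_succ_apply']
        calc ‖f (f^[m] p) - z‖ ≤ K * ‖f^[m] p - z‖ := hcontr _ ih.2
          _ ≤ K * (K ^ m * ‖p - z‖) := mul_le_mul_of_nonneg_left ih.1 hK0
          _ = K ^ (m+1) * ‖p - z‖ := by ring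
      refine ⟨h1, lt_of_le_of_lt (h1.trans ?_) hp⟩
      have hle : K ^ (m+1) ≤ 1 := pow_le_one₀ hK0 hK1.le
      calc K ^ (m+1) * ‖p - z‖ ≤ 1 * ‖p - z‖ :=
            mul_le_mul_of_nonneg_right hle (norm_nonneg _)
        _ = ‖p - z‖ := one_mul _
  refine ⟨fun m => (key m).2, ?_⟩
  rw [tendsto_iff_norm_sub_tendsto_zero]
  apply squeeze_zero (fun m => norm_nonneg _) (fun m => (key m).1)
  have h0 : Tendsto (fun m : ℕ => K ^ m) atTop (nhds 0) :=
    tendsto_pow_atTop_nhds_zero_of_lt_one hK0 hK1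
  simpa using h0.mul_const ‖p - z‖

/-- Auxiliary: a differentiable map whose derivative at a fixed point is bounded by
`K < 1` is locally a `(K+1)/2`-contraction towards the fixed point. -/
theorem contr_of_deriv_aux {f : ℝ × ℝ → ℝ × ℝ} {z : ℝ × ℝ} {K : ℝ}
    (hd : DifferentiableAt ℝ f z) (hfix : f z = z) (hK1 : K < 1)
    (hA : ∀ v : ℝ × ℝ, ‖fderiv ℝ f z v‖ ≤ K * ‖v‖) :
    ∀ᶠ p in nhds z, ‖f p - z‖ ≤ (K + 1) / 2 * ‖p - z‖ := by
  have hc : (0:ℝ) < (1 - K) / 2 := by linarith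
  have h2 := (Asymptotics.isLittleO_iff.mp hd.hasFDerivAt.isLittleO) hc
  filter_upwards [h2] with p hp
  have hsplit : ‖f p - z‖ ≤ ‖f p - f z - fderiv ℝ f z (p - z)‖ + ‖fderiv ℝ f z (p - z)‖ := by
    rw [hfix]
    calc ‖f p - z‖ = ‖(f p - z - fderiv ℝ f z (p - z)) + fderiv ℝ f z (p - z)‖ := by
          congr 1; abel
      _ ≤ _ := norm_add_le _ _
  calc ‖f p - z‖ ≤ ‖f p - f z - fderiv ℝ f z (p - z)‖ + ‖fderiv ℝ f z (p - z)‖ := hsplit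
    _ ≤ (1 - K) / 2 * ‖p - z‖ + K * ‖p - z‖ := add_le_add hp (hA _)
    _ = (K + 1) / 2 * ‖p - z‖ := by ring

set_option maxHeartbeats 2000000 in
/-- Local stability for two trading periods: there exists `ε > 0` such that for every
starting point `β⁰` with `0 < ‖β⁰ - (β̂₁, β̂₂)‖ < ε` (sup norm on `ℝ × ℝ`), all iterates
`β⁽ᵐ⁾ := T^[m] β⁰` remain in the domain of `T` and converge to `(β̂₁, β̂₂)`. -/
theorem two_period_locally_stable (Δ σu Sig0 : ℝ) (hΔ : 0 < Δ)
    (hσ : 0 < σu) (hSig : 0 < Sig0) (b1 : ℝ) (hb1 : b1 ∈ Set.Ioo (0 : ℝ) 1)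
    (hb1eq : 1 = b1 ^ 2 / ((1 - b1 ^ 2) ^ 2 * (1 + b1 ^ 2))) :
    let β1 : ℝ := b1 * σu / Real.sqrt (Sig0 * Δ)
    let β2 : ℝ := 1 * σu / Real.sqrt (Sig0 / (1 + b1 ^ 2) * Δ)
    ∃ ε > 0, ∀ p0 : ℝ × ℝ,
      0 < ‖p0 - (β1, β2)‖ → ‖p0 - (β1, β2)‖ < ε →
      (∀ m : ℕ, T2pDom Δ σu Sig0 ((T2pMap Δ σu Sig0)^[m] p0)) ∧
      Tendsto (fun m : ℕ => (T2pMap Δ σu Sig0)^[m] p0) atTop (nhds (β1, β2)) := by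
  intro x y
  obtain ⟨hb0, hb1'⟩ := hb1
  set u : ℝ := b1 ^ 2 with hu_def
  have hx_def : x = b1 * σu / Real.sqrt (Sig0 * Δ) := rfl
  have hy_def : y = 1 * σu / Real.sqrt (Sig0 / (1 + u) * Δ) := rfl
  have hu0 : 0 < u := by positivity
  have hu1 : u < 1 := by nlinarith
  have hcub : u ^ 3 - u ^ 2 - 2 * u + 1 = 0 := by
    have hne : (1 - u) ^ 2 * (1 + u) ≠ 0 := by
      have : (0:ℝ) < (1 - u) ^ 2 * (1 + u) :=
        mul_pos (pow_pos (by linarith) 2) (by linarith)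
      linarith
    rw [eq_div_iff hne] at hb1eq
    linear_combination hb1eq
  have hu49 : 4 / 9 < u := by
    by_contra h
    push_neg at h
    nlinarith [hcub, mul_nonneg (by linarith : (0:ℝ) ≤ 4/9 - u)
      (by nlinarith : (0:ℝ) ≤ 182/81 + 5/9*u - u^2)]
  have hu12 : u < 1 / 2 := by
    by_contra h
    push_neg at h
    nlinarith [hcub, mul_nonneg (by linarith : (0:ℝ) ≤ u - 1/2)
      (by nlinarith : (0:ℝ) ≤ 9/4 + u/2 - u^2)]
  have hSD : (0:ℝ) < Sig0 * Δ := by positivity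
  have hSD' : (0:ℝ) < Sig0 / (1 + u) * Δ := by positivity
  have hDS : (0:ℝ) < Δ * Sig0 := by positivity
  have hx0 : 0 < x := by
    rw [hx_def]; exact div_pos (mul_pos hb0 hσ) (Real.sqrt_pos.mpr hSD)
  have hy0 : 0 < y := by
    rw [hy_def]
    exact div_pos (by linarith [mul_pos hσ (one_pos (α := ℝ))]) (Real.sqrt_pos.mpr hSD')
  have hay : Δ * Sig0 * y ^ 2 = (1 + u) * σu ^ 2 := by
    rw [hy_def, div_pow, Real.sq_sqrt hSD'.le]
    field_simp
  have hax : Δ * Sig0 * x ^ 2 = u * σu ^ 2 := by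
    rw [hx_def, div_pow, Real.sq_sqrt hSD.le]
    field_simp
    rw [hu_def]
  have hxy : x = (1 - u) * y := by
    have h1 : Δ * Sig0 * x ^ 2 = Δ * Sig0 * ((1 - u) * y) ^ 2 := by
      have h2 : Δ * Sig0 * ((1-u)*y)^2 = (1-u)^2 * (Δ * Sig0 * y^2) := by ring
      rw [hax, h2, hay]
      linear_combination (-σu^2) * hcub
    have hsq : x ^ 2 = ((1 - u) * y) ^ 2 := mul_left_cancel₀ (ne_of_gt hDS) h1
    have hsum : 0 < x + (1 - u) * y := by nlinarith
    have hz : (x - (1 - u) * y) * (x + (1 - u) * y) = 0 := by linear_combination hsq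
    rcases mul_eq_zero.mp hz with h | h
    · linarith
    · linarith
  clear hx_def hy_def hax hb1eq
  -- denominator value and nonvanishing
  have hDveq : x * Δ * Sig0 * (x * Δ * Sig0 * (x ^ 2 - 4 * x * y + y ^ 2) + σu ^ 2 * (x - 4 * y))
      = -(2 * σu ^ 4 * (1 + u) ^ 3 * (1 - u)) := by
    rw [hxy]
    linear_combination ((-5)*σu^2 + (6)*u*σu^2 + (2)*u^2*σu^2 + (-5)*u^3*σu^2 + (1)*u^4*σu^2 + (1)*u^5*σu^2 + (-2)*y^2*Δ*Sig0 + (6)*y^2*u*Δ*Sig0 + (-5)*y^2*u^2*Δ*Sig0 + (1)*y^2*u^4*Δ*Sig0) * hay + ((-3)*σu^4 + (-1)*u*σu^4 + (3)*u^2*σu^4 + (1)*u^3*σu^4) * hcub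
  have hDvne : x * Δ * Sig0 * (x * Δ * Sig0 * (x ^ 2 - 4 * x * y + y ^ 2) + σu ^ 2 * (x - 4 * y)) ≠ 0 := by
    rw [hDveq]
    have h : (0:ℝ) < 2 * σu ^ 4 * (1 + u) ^ 3 * (1 - u) := by
      apply mul_pos (mul_pos (by positivity) (by positivity))
      linarith
    linarith
  have h2yne : 2 * y * Δ * Sig0 ≠ 0 :=
    ne_of_gt (mul_pos (mul_pos (mul_pos two_pos hy0) hΔ) hSig)
  -- fixed point
  have hfix1 : T2p1 Δ σu Sig0 x y = x := by
    rw [T2p1, div_eq_iff hDvne, hxy]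
    linear_combination ((4)*y*σu^2 + (-10)*y*u*σu^2 + (7)*y*u^2*σu^2 + (3)*y*u^3*σu^2 + (-6)*y*u^4*σu^2 + (2)*y*u^5*σu^2 + (2)*y^3*Δ*Sig0 + (-8)*y^3*u*Δ*Sig0 + (12)*y^3*u^2*Δ*Sig0 + (-8)*y^3*u^3*Δ*Sig0 + (2)*y^3*u^4*Δ*Sig0) * hay + ((3)*y*σu^4 + (-1)*y*u*σu^4 + (-2)*y*u^2*σu^4 + (2)*y*u^3*σu^4) * hcub
  have hfix2 : T2p2 Δ σu Sig0 x y = y := by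
    rw [T2p2, div_eq_iff h2yne, hxy]
    linear_combination ((-2)*u + (1)*u^2) * hay + ((1)*σu^2) * hcub
  -- partial derivatives at the fixed point
  have hd1v : (0:ℝ) < (1 + u) ^ 3 * (1 - u) ^ 2 := by
    apply mul_pos (by positivity)
    have h1u : (0:ℝ) < 1 - u := by linarith
    positivity
  have hF1 : HasDerivAt (fun w => T2p1 Δ σu Sig0 w y)
      (-(2 - 2 * u - u ^ 2) / ((1 + u) ^ 3 * (1 - u) ^ 2)) x := by
    have hnum : HasDerivAt (fun w : ℝ => (w ^ 2 * Δ * Sig0 + σu ^ 2) *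
        (w * Δ * Sig0 * (w - y) ^ 2 + σu ^ 2 * (w - 2 * y)))
        ((2 * x ^ 1 * Δ * Sig0) * (x * Δ * Sig0 * (x - y) ^ 2 + σu ^ 2 * (x - 2 * y)) +
          (x ^ 2 * Δ * Sig0 + σu ^ 2) *
          ((1 * Δ * Sig0) * (x - y) ^ 2 + (x * Δ * Sig0) * (2 * (x - y) ^ 1 * 1) + σu ^ 2 * 1)) x := by
      have h1 : HasDerivAt (fun w : ℝ => w ^ 2 * Δ * Sig0 + σu ^ 2) (2 * x ^ 1 * Δ * Sig0) x := by
        have := (((hasDerivAt_pow 2 x).mul_const Δ).mul_const Sig0).add_const (σu ^ 2)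
        convert this using 1 <;> first | rfl | skip
        all_goals (push_cast; ring)
      have h2 : HasDerivAt (fun w : ℝ => w * Δ * Sig0 * (w - y) ^ 2 + σu ^ 2 * (w - 2 * y))
          ((1 * Δ * Sig0) * (x - y) ^ 2 + (x * Δ * Sig0) * (2 * (x - y) ^ 1 * 1) + σu ^ 2 * 1) x := by
        have ha := (((hasDerivAt_id x).mul_const Δ).mul_const Sig0).mul
          (((hasDerivAt_id x).sub_const y).pow 2)
        have hb := ((hasDerivAt_id x).sub_const (2 * y)).const_mul (σu ^ 2)
        have := ha.add hb
        convert this using 1 <;> first | rfl | skip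
        all_goals (push_cast; ring)
      have := h1.mul h2
      convert this using 1 <;> first | rfl | skip
      all_goals (push_cast; ring)
    have hden : HasDerivAt (fun w : ℝ => w * Δ * Sig0 *
        (w * Δ * Sig0 * (w ^ 2 - 4 * w * y + y ^ 2) + σu ^ 2 * (w - 4 * y)))
        ((1 * Δ * Sig0) * (x * Δ * Sig0 * (x ^ 2 - 4 * x * y + y ^ 2) + σu ^ 2 * (x - 4 * y)) +
          (x * Δ * Sig0) * ((1 * Δ * Sig0) * (x ^ 2 - 4 * x * y + y ^ 2) +
            (x * Δ * Sig0) * (2 * x ^ 1 - 4 * y) + σu ^ 2 * 1)) x := by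
      have hi : HasDerivAt (fun w : ℝ => w ^ 2 - 4 * w * y + y ^ 2) (2 * x ^ 1 - 4 * y) x := by
        have := ((hasDerivAt_pow 2 x).sub
          (((hasDerivAt_id x).const_mul 4).mul_const y)).add_const (y ^ 2)
        convert this using 1 <;> first | rfl | skip
        all_goals (push_cast; ring)
      have hj : HasDerivAt (fun w : ℝ => w * Δ * Sig0 * (w ^ 2 - 4 * w * y + y ^ 2) +
          σu ^ 2 * (w - 4 * y))
          ((1 * Δ * Sig0) * (x ^ 2 - 4 * x * y + y ^ 2) + (x * Δ * Sig0) * (2 * x ^ 1 - 4 * y) +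
            σu ^ 2 * 1) x := by
        have ha := ((((hasDerivAt_id x).mul_const Δ).mul_const Sig0).mul hi)
        have hb := ((hasDerivAt_id x).sub_const (4 * y)).const_mul (σu ^ 2)
        have := ha.add hb
        convert this using 1 <;> first | rfl | skip
        all_goals ring
      have := (((hasDerivAt_id x).mul_const Δ).mul_const Sig0).mul hj
      convert this using 1 <;> first | rfl | skip
      all_goals ring
    have hraw := hnum.div hden hDvne
    have hfe : (fun w => T2p1 Δ σu Sig0 w y) = (fun w : ℝ => (w ^ 2 * Δ * Sig0 + σu ^ 2) *
        (w * Δ * Sig0 * (w - y) ^ 2 + σu ^ 2 * (w - 2 * y)) / (w * Δ * Sig0 *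
        (w * Δ * Sig0 * (w ^ 2 - 4 * w * y + y ^ 2) + σu ^ 2 * (w - 4 * y)))) := by
      funext w
      rw [T2p1]
    rw [hfe]
    convert hraw using 1 <;> first | rfl | skip
    rw [div_eq_div_iff (ne_of_gt hd1v) (pow_ne_zero 2 hDvne), hxy]
    linear_combination -((34)*σu^6 + (-105)*u*σu^6 + (-3)*u^2*σu^6 + (214)*u^3*σu^6 + (-111)*u^4*σu^6 + (-90)*u^5*σu^6 + (55)*u^6*σu^6 + (-61)*u^7*σu^6 + (119)*u^8*σu^6 + (37)*u^9*σu^6 + (-148)*u^10*σu^6 + (21)*u^11*σu^6 + (67)*u^12*σu^6 + (-20)*u^13*σu^6 + (-14)*u^14*σu^6 + (4)*u^15*σu^6 + (1)*u^16*σu^6 + (39)*y^2*σu^4*Δ*Sig0 + (-137)*y^2*u*σu^4*Δ*Sig0 + (127)*y^2*u^2*σu^4*Δ*Sig0 + (74)*y^2*u^3*σu^4*Δ*Sig0 + (-186)*y^2*u^4*σu^4*Δ*Sig0 + (101)*y^2*u^5*σu^4*Δ*Sig0 + (-43)*y^2*u^6*σu^4*Δ*Sig0 + (-17)*y^2*u^7*σu^4*Δ*Sig0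 + (136)*y^2*u^8*σu^4*Δ*Sig0 + (-99)*y^2*u^9*σu^4*Δ*Sig0 + (-49)*y^2*u^10*σu^4*Δ*Sig0 + (70)*y^2*u^11*σu^4*Δ*Sig0 + (-3)*y^2*u^12*σu^4*Δ*Sig0 + (-17)*y^2*u^13*σu^4*Δ*Sig0 + (3)*y^2*u^14*σu^4*Δ*Sig0 + (1)*y^2*u^15*σu^4*Δ*Sig0 + (28)*y^4*σu^2*Δ^2*Sig0^2 + (-136)*y^4*u*σu^2*Δ^2*Sig0^2 + (234)*y^4*u^2*σu^2*Δ^2*Sig0^2 + (-146)*y^4*u^3*σu^2*Δ^2*Sig0^2 + (-24)*y^4*u^4*σu^2*Δ^2*Sig0^2 + (95)*y^4*u^5*σu^2*Δ^2*Sig0^2 + (-135)*y^4*u^6*σu^2*Δ^2*Sig0^2 + (128)*y^4*u^7*σu^2*Δ^2*Sig0^2 + (5)*y^4*u^8*σu^2*Δ^2*Sig0^2 + (-103)*y^4*u^9*σu^2*Δ^2*Sig0^2 + (54)*y^4*u^10*σu^2*Δ^2*Sig0^2 + (16)*y^4*u^11*σu^2*Δ^2*Sig0^2 + (-19)*y^4*u^12*σu^2*Δ^2*Sig0^2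 + (2)*y^4*u^13*σu^2*Δ^2*Sig0^2 + (1)*y^4*u^14*σu^2*Δ^2*Sig0^2 + (8)*y^6*Δ^3*Sig0^3 + (-52)*y^6*u*Δ^3*Sig0^3 + (136)*y^6*u^2*Δ^3*Sig0^3 + (-180)*y^6*u^3*Δ^3*Sig0^3 + (127)*y^6*u^4*Δ^3*Sig0^3 + (-49)*y^6*u^5*Δ^3*Sig0^3 + (-9)*y^6*u^6*Δ^3*Sig0^3 + (72)*y^6*u^7*Δ^3*Sig0^3 + (-82)*y^6*u^8*Δ^3*Sig0^3 + (12)*y^6*u^9*Δ^3*Sig0^3 + (35)*y^6*u^10*Δ^3*Sig0^3 + (-20)*y^6*u^11*Δ^3*Sig0^3 + (1)*y^6*u^12*Δ^3*Sig0^3 + (1)*y^6*u^13*Δ^3*Sig0^3) * hay - ((34)*σu^8 + (-3)*u*σu^8 + (-80)*u^2*σu^8 + (14)*u^3*σu^8 + (54)*u^4*σu^8 + (1)*u^5*σu^8 + (7)*u^6*σu^8 + (-45)*u^7*σu^8 + (-26)*u^8*σu^8 + (52)*u^9*σu^8 + (12)*u^10*σu^8 + (-25)*u^11*σu^8 + (-2)*u^12*σu^8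 + (6)*u^13*σu^8 + (1)*u^14*σu^8) * hcub
  have hF2 : HasDerivAt (fun w => T2p2 Δ σu Sig0 w y) (1 - u) x := by
    have hnum := ((((hasDerivAt_pow 2 x).add_const (y ^ 2)).const_mul (Δ * Sig0)).add_const
      (σu ^ 2)).div_const (2 * y * Δ * Sig0)
    have hfe : (fun w => T2p2 Δ σu Sig0 w y) =
        (fun w : ℝ => (Δ * Sig0 * (w ^ 2 + y ^ 2) + σu ^ 2) / (2 * y * Δ * Sig0)) := by
      funext w
      rw [T2p2]
    rw [hfe]
    convert hnum using 1 <;> first | rfl | skip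
    rw [eq_div_iff h2yne, hxy]
    push_cast
    ring
  have hG1 : HasDerivAt (fun w => T2p1 Δ σu Sig0 x w) 0 y := by
    have hnum : HasDerivAt (fun w : ℝ => (x ^ 2 * Δ * Sig0 + σu ^ 2) *
        (x * Δ * Sig0 * (x - w) ^ 2 + σu ^ 2 * (x - 2 * w)))
        ((x ^ 2 * Δ * Sig0 + σu ^ 2) *
          ((x * Δ * Sig0) * (2 * (x - y) ^ 1 * (0 - 1)) + σu ^ 2 * (0 - 2 * 1))) y := by
      have ha := (((hasDerivAt_const y x).sub (hasDerivAt_id y)).pow 2).const_mul (x * Δ * Sig0)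
      have hb := ((hasDerivAt_const y x).sub ((hasDerivAt_id y).const_mul 2)).const_mul (σu ^ 2)
      have := (ha.add hb).const_mul (x ^ 2 * Δ * Sig0 + σu ^ 2)
      convert this using 1 <;> first | rfl | skip
      all_goals (push_cast; ring)
    have hden : HasDerivAt (fun w : ℝ => x * Δ * Sig0 *
        (x * Δ * Sig0 * (x ^ 2 - 4 * x * w + w ^ 2) + σu ^ 2 * (x - 4 * w)))
        ((x * Δ * Sig0) * ((x * Δ * Sig0) * (0 - 4 * x * 1 + 2 * y ^ 1) + σu ^ 2 * (0 - 4 * 1))) y := by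
      have hi := (((hasDerivAt_const y (x ^ 2)).sub
        ((hasDerivAt_id y).const_mul (4 * x))).add (hasDerivAt_pow 2 y)).const_mul (x * Δ * Sig0)
      have hb := ((hasDerivAt_const y x).sub ((hasDerivAt_id y).const_mul 4)).const_mul (σu ^ 2)
      have := (hi.add hb).const_mul (x * Δ * Sig0)
      convert this using 1 <;> first | rfl | skip
      all_goals (push_cast; ring)
    have hraw := hnum.div hden hDvne
    have hfe : (fun w => T2p1 Δ σu Sig0 x w) = (fun w : ℝ => (x ^ 2 * Δ * Sig0 + σu ^ 2) *
        (x * Δ * Sig0 * (x - w) ^ 2 + σu ^ 2 * (x - 2 * w)) / (x * Δ * Sig0 *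
        (x * Δ * Sig0 * (x ^ 2 - 4 * x * w + w ^ 2) + σu ^ 2 * (x - 4 * w)))) := by
      funext w
      rw [T2p1]
    rw [hfe]
    convert hraw using 1 <;> first | rfl | skip
    rw [eq_comm, div_eq_zero_iff]
    left
    rw [hxy]
    linear_combination ((8)*σu^6 + (-40)*u*σu^6 + (58)*u^2*σu^6 + (12)*u^3*σu^6 + (-106)*u^4*σu^6 + (78)*u^5*σu^6 + (32)*u^6*σu^6 + (-68)*u^7*σu^6 + (22)*u^8*σu^6 + (12)*u^9*σu^6 + (-10)*u^10*σu^6 + (2)*u^11*σu^6 + (6)*y^2*σu^4*Δ*Sig0 + (-42)*y^2*u*σu^4*Δ*Sig0 + (98)*y^2*u^2*σu^4*Δ*Sig0 + (-86)*y^2*u^3*σu^4*Δ*Sig0 + (-20)*y^2*u^4*σu^4*Δ*Sig0 + (98)*y^2*u^5*σu^4*Δ*Sig0 + (-66)*y^2*u^6*σu^4*Δ*Sig0 + (-2)*y^2*u^7*σu^4*Δ*Sig0 + (24)*y^2*u^8*σu^4*Δ*Sig0 + (-12)*y^2*u^9*σu^4*Δ*Sig0 + (2)*y^2*u^10*σu^4*Δ*Sig0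 + (2)*y^4*σu^2*Δ^2*Sig0^2 + (-24)*y^4*u*σu^2*Δ^2*Sig0^2 + (88)*y^4*u^2*σu^2*Δ^2*Sig0^2 + (-150)*y^4*u^3*σu^2*Δ^2*Sig0^2 + (124)*y^4*u^4*σu^2*Δ^2*Sig0^2 + (-26)*y^4*u^5*σu^2*Δ^2*Sig0^2 + (-40)*y^4*u^6*σu^2*Δ^2*Sig0^2 + (38)*y^4*u^7*σu^2*Δ^2*Sig0^2 + (-14)*y^4*u^8*σu^2*Δ^2*Sig0^2 + (2)*y^4*u^9*σu^2*Δ^2*Sig0^2 + (-4)*y^6*u*Δ^3*Sig0^3 + (26)*y^6*u^2*Δ^3*Sig0^3 + (-72)*y^6*u^3*Δ^3*Sig0^3 + (110)*y^6*u^4*Δ^3*Sig0^3 + (-100)*y^6*u^5*Δ^3*Sig0^3 + (54)*y^6*u^6*Δ^3*Sig0^3 + (-16)*y^6*u^7*Δ^3*Sig0^3 + (2)*y^6*u^8*Δ^3*Sig0^3) * hay + ((8)*σu^8 + (-16)*u*σu^8 + (-6)*u^2*σu^8 + (34)*u^3*σu^8 + (-16)*u^4*σu^8 + (-20)*u^5*σu^8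 + (20)*u^6*σu^8 + (-6)*u^8*σu^8 + (2)*u^9*σu^8) * hcub
  have hG2 : HasDerivAt (fun w => T2p2 Δ σu Sig0 x w) 0 y := by
    have hnum : HasDerivAt (fun w : ℝ => Δ * Sig0 * (x ^ 2 + w ^ 2) + σu ^ 2)
        (Δ * Sig0 * (0 + 2 * y ^ 1)) y := by
      have := (((hasDerivAt_const y (x ^ 2)).add (hasDerivAt_pow 2 y)).const_mul
        (Δ * Sig0)).add_const (σu ^ 2)
      convert this using 1 <;> first | rfl | skip
      all_goals (push_cast; ring)
    have hden : HasDerivAt (fun w : ℝ => 2 * w * Δ * Sig0) (2 * 1 * Δ * Sig0) y := by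
      have := (((hasDerivAt_id y).const_mul 2).mul_const Δ).mul_const Sig0
      convert this using 1 <;> first | rfl | skip
      all_goals (push_cast; ring)
    have hraw := hnum.div hden h2yne
    have hfe : (fun w => T2p2 Δ σu Sig0 x w) =
        (fun w : ℝ => (Δ * Sig0 * (x ^ 2 + w ^ 2) + σu ^ 2) / (2 * w * Δ * Sig0)) := by
      funext w
      rw [T2p2]
    rw [hfe]
    convert hraw using 1 <;> first | rfl | skip
    rw [eq_comm, div_eq_zero_iff]
    left
    rw [hxy]
    linear_combination ((4)*u*Δ*Sig0 + (-2)*u^2*Δ*Sig0) * hay + ((-2)*σu^2*Δ*Sig0) * hcub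
  -- differentiability of the map at the fixed point
  have hdiff1 : DifferentiableAt ℝ (fun p : ℝ × ℝ => T2p1 Δ σu Sig0 p.1 p.2) (x, y) := by
    simp only [T2p1]
    have hn : DifferentiableAt ℝ (fun p : ℝ × ℝ => (p.1 ^ 2 * Δ * Sig0 + σu ^ 2) *
        (p.1 * Δ * Sig0 * (p.1 - p.2) ^ 2 + σu ^ 2 * (p.1 - 2 * p.2))) (x, y) := by fun_prop
    have hd : DifferentiableAt ℝ (fun p : ℝ × ℝ => p.1 * Δ * Sig0 *
        (p.1 * Δ * Sig0 * (p.1 ^ 2 - 4 * p.1 * p.2 + p.2 ^ 2) +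
          σu ^ 2 * (p.1 - 4 * p.2))) (x, y) := by fun_prop
    simp only [div_eq_mul_inv]
    exact hn.mul (hd.inv hDvne)
  have hdiff2 : DifferentiableAt ℝ (fun p : ℝ × ℝ => T2p2 Δ σu Sig0 p.1 p.2) (x, y) := by
    simp only [T2p2]
    have hn : DifferentiableAt ℝ (fun p : ℝ × ℝ =>
        Δ * Sig0 * (p.1 ^ 2 + p.2 ^ 2) + σu ^ 2) (x, y) := by fun_prop
    have hd : DifferentiableAt ℝ (fun p : ℝ × ℝ => 2 * p.2 * Δ * Sig0) (x, y) := by fun_prop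
    simp only [div_eq_mul_inv]
    exact hn.mul (hd.inv h2yne)
  have hdiff : DifferentiableAt ℝ (T2pMap Δ σu Sig0) (x, y) := by
    have : T2pMap Δ σu Sig0 = fun p : ℝ × ℝ =>
        (T2p1 Δ σu Sig0 p.1 p.2, T2p2 Δ σu Sig0 p.1 p.2) := rfl
    rw [this]
    exact hdiff1.prodMk hdiff2
  have hfixz : T2pMap Δ σu Sig0 (x, y) = (x, y) := by
    rw [T2pMap]
    exact Prod.ext_iff.mpr ⟨hfix1, hfix2⟩
  -- the derivative applied to basis vectors
  set A := fderiv ℝ (T2pMap Δ σu Sig0) (x, y) with hA_def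
  have hA1 : A ((1:ℝ), (0:ℝ)) = (-(2 - 2 * u - u ^ 2) / ((1 + u) ^ 3 * (1 - u) ^ 2), 1 - u) := by
    have hpath : HasDerivAt (fun t : ℝ => ((x + t, y) : ℝ × ℝ)) ((1:ℝ), (0:ℝ)) 0 := by
      have h1 : HasDerivAt (fun t : ℝ => x + t) 1 0 := (hasDerivAt_id 0).const_add x
      exact h1.prodMk (hasDerivAt_const 0 y)
    have hfd : HasFDerivAt (T2pMap Δ σu Sig0) A ((fun t : ℝ => ((x + t, y) : ℝ × ℝ)) 0) := by
      simpa using hdiff.hasFDerivAt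
    have hcomp := hfd.comp_hasDerivAt 0 hpath
    have hx0' : HasDerivAt (fun w => T2p1 Δ σu Sig0 w y)
        (-(2 - 2 * u - u ^ 2) / ((1 + u) ^ 3 * (1 - u) ^ 2)) (x + 0) := by rwa [add_zero]
    have hx2' : HasDerivAt (fun w => T2p2 Δ σu Sig0 w y) (1 - u) (x + 0) := by rwa [add_zero]
    have hc1 := hx0'.comp 0 ((hasDerivAt_id 0).const_add x)
    have hc2 := hx2'.comp 0 ((hasDerivAt_id 0).const_add x)
    have hexp : HasDerivAt (fun t : ℝ => T2pMap Δ σu Sig0 (x + t, y))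
        (-(2 - 2 * u - u ^ 2) / ((1 + u) ^ 3 * (1 - u) ^ 2), 1 - u) 0 := by
      have := (hc1.prodMk hc2)
      simp only [Function.comp, mul_one] at this
      convert this using 1 <;> rfl
    exact hcomp.unique hexp
  have hA2 : A ((0:ℝ), (1:ℝ)) = ((0:ℝ), (0:ℝ)) := by
    have hpath : HasDerivAt (fun t : ℝ => ((x, y + t) : ℝ × ℝ)) ((0:ℝ), (1:ℝ)) 0 := by
      have h1 : HasDerivAt (fun t : ℝ => y + t) 1 0 := (hasDerivAt_id 0).const_add y
      exact (hasDerivAt_const 0 x).prodMk h1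
    have hfd : HasFDerivAt (T2pMap Δ σu Sig0) A ((fun t : ℝ => ((x, y + t) : ℝ × ℝ)) 0) := by
      simpa using hdiff.hasFDerivAt
    have hcomp := hfd.comp_hasDerivAt 0 hpath
    have hy1' : HasDerivAt (fun w => T2p1 Δ σu Sig0 x w) 0 (y + 0) := by rwa [add_zero]
    have hy2' : HasDerivAt (fun w => T2p2 Δ σu Sig0 x w) 0 (y + 0) := by rwa [add_zero]
    have hc1 := hy1'.comp 0 ((hasDerivAt_id 0).const_add y)
    have hc2 := hy2'.comp 0 ((hasDerivAt_id 0).const_add y)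
    have hexp : HasDerivAt (fun t : ℝ => T2pMap Δ σu Sig0 (x, y + t)) ((0:ℝ), (0:ℝ)) 0 := by
      have := (hc1.prodMk hc2)
      simp only [Function.comp, zero_mul] at this
      convert this using 1 <;> rfl
    exact hcomp.unique hexp
  -- norm bound on the derivative
  set K : ℝ := ‖((-(2 - 2 * u - u ^ 2) / ((1 + u) ^ 3 * (1 - u) ^ 2), 1 - u) : ℝ × ℝ)‖ with hK_def
  have hK0 : 0 ≤ K := norm_nonneg _
  have hd1abs : |(-(2 - 2 * u - u ^ 2) / ((1 + u) ^ 3 * (1 - u) ^ 2))| < 1 := by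
    have hdenpos : (0:ℝ) < (1 + u) ^ 3 * (1 - u) ^ 2 := by
      apply mul_pos (by positivity)
      have h1u : (0:ℝ) < 1 - u := by linarith
      positivity
    have hnumpos : (0:ℝ) < 2 - 2 * u - u ^ 2 := by nlinarith
    rw [abs_div, abs_neg, abs_of_pos hnumpos, abs_of_pos hdenpos, div_lt_one hdenpos]
    have hfact : (1 + u) ^ 3 * (1 - u) ^ 2 - (2 - 2 * u - u ^ 2) =
        4 * u ^ 2 + 5 * u - 3 + (u ^ 2 + 2 * u + 2) * (u ^ 3 - u ^ 2 - 2 * u + 1) := by ring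
    have hpos : (0:ℝ) < 4 * u ^ 2 + 5 * u - 3 := by
      nlinarith [mul_nonneg (by linarith : (0:ℝ) ≤ u - 4/9) (by linarith : (0:ℝ) ≤ 4*u + 61/9)]
    nlinarith [hfact, hcub, hpos]
  have hK1 : K < 1 := by
    rw [hK_def, Prod.norm_def]
    apply max_lt
    · rw [show ((-(2 - 2 * u - u ^ 2) / ((1 + u) ^ 3 * (1 - u) ^ 2), 1 - u) : ℝ × ℝ).1 =
          -(2 - 2 * u - u ^ 2) / ((1 + u) ^ 3 * (1 - u) ^ 2) from rfl, Real.norm_eq_abs]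
      exact hd1abs
    · rw [show ((-(2 - 2 * u - u ^ 2) / ((1 + u) ^ 3 * (1 - u) ^ 2), 1 - u) : ℝ × ℝ).2 =
          1 - u from rfl, Real.norm_eq_abs, abs_lt]
      constructor <;> linarith
  have hAbound : ∀ v : ℝ × ℝ, ‖A v‖ ≤ K * ‖v‖ := by
    intro v
    have hv : v = v.1 • (((1:ℝ), (0:ℝ)) : ℝ × ℝ) + v.2 • (((0:ℝ), (1:ℝ)) : ℝ × ℝ) := by
      apply Prod.ext <;> simp
    have hAv : A v = v.1 • ((-(2 - 2 * u - u ^ 2) / ((1 + u) ^ 3 * (1 - u) ^ 2), 1 - u) : ℝ × ℝ) := by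
      conv_lhs => rw [hv]
      rw [map_add, map_smul, map_smul, hA1, hA2]
      simp
    rw [hAv, norm_smul, Real.norm_eq_abs, ← hK_def]
    have h1 : |v.1| ≤ ‖v‖ := by
      simpa [Real.norm_eq_abs] using norm_fst_le v
    calc |v.1| * K ≤ ‖v‖ * K := mul_le_mul_of_nonneg_right h1 hK0
      _ = K * ‖v‖ := mul_comm _ _
  -- local contraction
  have hcontr := contr_of_deriv_aux hdiff hfixz hK1 hAbound
  -- domain is locally satisfied
  have hdom : ∀ᶠ p in nhds ((x, y) : ℝ × ℝ), T2pDom Δ σu Sig0 p := by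
    have hc1 : ContinuousAt (fun p : ℝ × ℝ => p.1 * Δ * Sig0 *
        (p.1 * Δ * Sig0 * (p.1 ^ 2 - 4 * p.1 * p.2 + p.2 ^ 2) +
          σu ^ 2 * (p.1 - 4 * p.2))) (x, y) := by fun_prop
    have hc2 : ContinuousAt (fun p : ℝ × ℝ => 2 * p.2 * Δ * Sig0) (x, y) := by fun_prop
    have he1 := hc1.eventually_ne hDvne
    have he2 := hc2.eventually_ne h2yne
    filter_upwards [he1, he2] with p h1 h2
    exact ⟨h1, h2⟩
  -- extract a ball
  obtain ⟨ε, hε, hball⟩ := Metric.eventually_nhds_iff.mp (hcontr.and hdom)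
  refine ⟨ε, hε, ?_⟩
  intro p0 _ hlt
  have hK'0 : (0:ℝ) ≤ (K + 1) / 2 := by linarith
  have hK'1 : (K + 1) / 2 < 1 := by linarith
  have hcontr' : ∀ p : ℝ × ℝ, ‖p - ((x, y) : ℝ × ℝ)‖ < ε →
      ‖T2pMap Δ σu Sig0 p - ((x, y) : ℝ × ℝ)‖ ≤ (K + 1) / 2 * ‖p - ((x, y) : ℝ × ℝ)‖ := by
    intro p hp
    exact (hball (by rwa [dist_eq_norm])).1
  obtain ⟨hin, htend⟩ := iterate_conv_aux hK'0 hK'1 hcontr' p0 hlt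
  refine ⟨?_, htend⟩
  intro m
  exact (hball (by rw [dist_eq_norm]; exact hin m)).2
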